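/- Let n ≥ 2, k ≥ 1, and let T : P_{n,2k} → P_{n,2k} be the linear operator T(f) = ∫_{S^{n-1}} f(v)·(v₁x₁+⋯+v_nx_n)^{2k} dσ(v). Then for all f, g ∈ P_{n,2k}, ⟨T(f), g⟩_d = (2k)!·⟨f, g⟩, where ⟨·,·⟩_d is the differential inner product and ⟨·,·⟩ is the L² inner product. -/
import Mathlib


open MeasureTheory MvPolynomial

noncomputable section

/-- The rotation-invariant probability measure `σ` on the unit sphere `S^{m-1} ⊆ ℝ^m`
(the normalization of the surface measure). -/
def sphereMeasure (m : ℕ) : Measure (Metric.sphere (0 : EuclideanSpace ℝ (Fin m)) 1) :=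
  ((volume : Measure (EuclideanSpace ℝ (Fin m))).toSphere Set.univ)⁻¹ •
    (volume : Measure (EuclideanSpace ℝ (Fin m))).toSphere

/-- Evaluation of a polynomial at a point of the unit sphere. -/
def evalS {m : ℕ} (f : MvPolynomial (Fin m) ℝ)
    (v : Metric.sphere (0 : EuclideanSpace ℝ (Fin m)) 1) : ℝ :=
  eval (fun i => (v : EuclideanSpace ℝ (Fin m)) i) f

/-- The L² inner product `⟨f,g⟩ = ∫_{S^{n-1}} f·g dσ`. -/
def L2inner (n : ℕ) (f g : MvPolynomial (Fin n) ℝ) : ℝ :=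
  ∫ v, evalS f v * evalS g v ∂(sphereMeasure n)

/-- `r^{2k} = (x₁² + ⋯ + x_n²)^k`. -/
def rPow (n k : ℕ) : MvPolynomial (Fin n) ℝ := (∑ i : Fin n, X i ^ 2) ^ k

/-- Membership in the hyperplane `M` of forms of degree `2k` with integral 0 on the sphere. -/
def memM (n k : ℕ) (f : MvPolynomial (Fin n) ℝ) : Prop :=
  f.IsHomogeneous (2 * k) ∧ (∫ v, evalS f v ∂(sphereMeasure n)) = 0

/-- `D_M = C(n+2k-1, 2k) - 1`, the dimension of `M`. -/
def DM (n k : ℕ) : ℕ := Nat.choose (n + 2 * k - 1) (2 * k) - 1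

/-- The unit ball of the L² metric in `M`. -/
def BM (n k : ℕ) : Set (MvPolynomial (Fin n) ℝ) :=
  {f | memM n k f ∧ L2inner n f f ≤ 1}

/-- The section `C̃` of the cone of nonnegative forms: `f ∈ M` with `f + r^{2k}` nonnegative. -/
def Ctilde (n k : ℕ) : Set (MvPolynomial (Fin n) ℝ) :=
  {f | memM n k f ∧ ∀ x : Fin n → ℝ, 0 ≤ eval x (f + rPow n k)}

/-- `f` is a sum of squares of forms of degree `k`. -/
def IsSOS (n k : ℕ) (f : MvPolynomial (Fin n) ℝ) : Prop :=
  ∃ (m : ℕ) (g : Fin m → MvPolynomial (Fin n) ℝ),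
    (∀ i, (g i).IsHomogeneous k) ∧ f = ∑ i, g i ^ 2

/-- The section `S̃q` of the cone of sums of squares. -/
def SqTilde (n k : ℕ) : Set (MvPolynomial (Fin n) ℝ) :=
  {f | memM n k f ∧ IsSOS n k (f + rPow n k)}

/-- `f` is a sum of `2k`-th powers of linear forms. -/
def IsSOP (n k : ℕ) (f : MvPolynomial (Fin n) ℝ) : Prop :=
  ∃ (m : ℕ) (l : Fin m → MvPolynomial (Fin n) ℝ),
    (∀ i, (l i).IsHomogeneous 1) ∧ f = ∑ i, l i ^ (2 * k)

/-- The section `L̃f` of the cone of sums of `2k`-th powers of linear forms. -/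
def LfTilde (n k : ℕ) : Set (MvPolynomial (Fin n) ℝ) :=
  {f | memM n k f ∧ IsSOP n k (f + rPow n k)}

/-- `‖f‖_∞ = max_{x ∈ S^{n-1}} |f(x)|`. -/
def supNorm (n : ℕ) (f : MvPolynomial (Fin n) ℝ) : ℝ :=
  ⨆ v : Metric.sphere (0 : EuclideanSpace ℝ (Fin n)) 1, |evalS f v|

/-- The gradient inner product `⟨f,g⟩_G = (1/(4k²)) ∫_{S^{n-1}} ⟨∇f,∇g⟩ dσ`. -/
def gradInner (n k : ℕ) (f g : MvPolynomial (Fin n) ℝ) : ℝ :=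
  (1 / (4 * (k : ℝ) ^ 2)) *
    ∫ v, (∑ i : Fin n, evalS (pderiv i f) v * evalS (pderiv i g) v) ∂(sphereMeasure n)

/-- The unit ball of the gradient metric in `M`. -/
def BG (n k : ℕ) : Set (MvPolynomial (Fin n) ℝ) :=
  {f | memM n k f ∧ gradInner n k f f ≤ 1}

/-- The differential (apolar) inner product `⟨f,g⟩_d = D_f(g) = ∑_α α! c_α(f) c_α(g)`. -/
def diffInner (n : ℕ) (f g : MvPolynomial (Fin n) ℝ) : ℝ :=
  ∑ α ∈ f.support, (∏ i, (Nat.factorial (α i) : ℝ)) * f.coeff α * g.coeff α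

/-- The linear form `v₁x₁ + ⋯ + v_nx_n`. -/
def linForm (n : ℕ) (v : Fin n → ℝ) : MvPolynomial (Fin n) ℝ :=
  ∑ i, C (v i) * X i

/-- The norm `‖f‖_sq = max { |⟨f, g²⟩| : g ∈ P_{n,k}, ∫ g² dσ = 1 }`. -/
def sqNorm (n k : ℕ) (f : MvPolynomial (Fin n) ℝ) : ℝ :=
  ⨆ g : {g : MvPolynomial (Fin n) ℝ // g.IsHomogeneous k ∧ L2inner n g g = 1},
    |L2inner n f ((g : MvPolynomial (Fin n) ℝ) ^ 2)|

/-- The dual cone of `L` in the L² (integral) metric, inside `P_{n,2k}`. -/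
def dualI (n k : ℕ) (L : Set (MvPolynomial (Fin n) ℝ)) : Set (MvPolynomial (Fin n) ℝ) :=
  {f | f.IsHomogeneous (2 * k) ∧ ∀ g ∈ L, 0 ≤ L2inner n f g}

/-- The dual cone of `L` in the differential metric, inside `P_{n,2k}`. -/
def dualD (n k : ℕ) (L : Set (MvPolynomial (Fin n) ℝ)) : Set (MvPolynomial (Fin n) ℝ) :=
  {f | f.IsHomogeneous (2 * k) ∧ ∀ g ∈ L, 0 ≤ diffInner n f g}

instance sphereMeasure_finite (m : ℕ) : IsFiniteMeasure (sphereMeasure m) := by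
  constructor
  rw [sphereMeasure, Measure.smul_apply, smul_eq_mul]
  set a := (volume : Measure (EuclideanSpace ℝ (Fin m))).toSphere Set.univ with ha
  rcases eq_or_ne a 0 with h | h
  · simp [h]
  rcases eq_or_ne a ⊤ with h' | h'
  · simp [h']
  · rw [ENNReal.inv_mul_cancel h h']
    exact ENNReal.one_lt_top

lemma continuous_evalS {m : ℕ} (f : MvPolynomial (Fin m) ℝ) : Continuous (evalS f) := by
  apply (MvPolynomial.continuous_eval f).comp
  exact continuous_pi fun i => (EuclideanSpace.proj i).continuous.comp continuous_subtype_val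

lemma integrable_sphere {m : ℕ} {F : Metric.sphere (0 : EuclideanSpace ℝ (Fin m)) 1 → ℝ}
    (hF : Continuous F) : Integrable F (sphereMeasure m) :=
  hF.integrable_of_hasCompactSupport (HasCompactSupport.of_compactSpace F)

lemma prod_X_pow_univ {n : ℕ} (s : Fin n →₀ ℕ) :
    (∏ i : Fin n, (X i : MvPolynomial (Fin n) ℝ) ^ s i) = monomial s 1 := by
  rw [← prod_X_pow_eq_monomial]
  exact (Finset.prod_subset (Finset.subset_univ _) (fun x _ hx => by
    rw [Finsupp.notMem_support_iff.mp hx, pow_zero])).symm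

lemma coeff_linForm_pow (n N : ℕ) (v : Fin n → ℝ) (α : Fin n →₀ ℕ) :
    ((linForm n v) ^ N).coeff α =
      if (∑ i, α i) = N then (Nat.multinomial Finset.univ ⇑α : ℝ) * ∏ i, v i ^ α i else 0 := by
  classical
  rw [linForm, Finset.sum_pow_eq_sum_piAntidiag, coeff_sum]
  have hterm : ∀ kk : Fin n → ℕ,
      MvPolynomial.coeff α ((Nat.multinomial Finset.univ kk : MvPolynomial (Fin n) ℝ) *
        ∏ i, (C (v i) * X i) ^ kk i) =
      if kk = ⇑α then (Nat.multinomial Finset.univ kk : ℝ) * ∏ i, v i ^ kk i else 0 := by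
    intro kk
    have hm : (∏ i, (C (v i) * X i) ^ kk i : MvPolynomial (Fin n) ℝ)
        = monomial (Finsupp.equivFunOnFinite.symm kk) (∏ i, v i ^ kk i) := by
      simp_rw [mul_pow, ← C_pow, Finset.prod_mul_distrib]
      rw [← map_prod (C : ℝ →+* MvPolynomial (Fin n) ℝ)]
      have h2 : ∏ x : Fin n, (X x : MvPolynomial (Fin n) ℝ) ^ kk x
          = monomial (Finsupp.equivFunOnFinite.symm kk) 1 := prod_X_pow_univ (Finsupp.equivFunOnFinite.symm kk)
      rw [h2, C_mul_monomial, mul_one]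
    rw [hm, ← C_eq_coe_nat, C_mul_monomial, coeff_monomial]
    have : (Finsupp.equivFunOnFinite.symm kk = α) ↔ kk = ⇑α := by
      rw [Equiv.symm_apply_eq]; rfl
    simp only [this]
  rw [Finset.sum_congr rfl fun kk _ => hterm kk, Finset.sum_ite_eq' _ (⇑α)]
  simp only [Finset.mem_piAntidiag]
  by_cases h : (∑ i, α i) = N
  · rw [if_pos ⟨h, fun i _ => Finset.mem_univ i⟩, if_pos h]
  · rw [if_neg (by tauto), if_neg h]

theorem T_switches_metrics (n k : ℕ) (hn : 2 ≤ n) (hk : 1 ≤ k)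
    (T : MvPolynomial (Fin n) ℝ →ₗ[ℝ] MvPolynomial (Fin n) ℝ)
    (hT : ∀ (f : MvPolynomial (Fin n) ℝ) (α : Fin n →₀ ℕ),
      (T f).coeff α =
        ∫ v, evalS f v *
          ((linForm n (fun i => (v : EuclideanSpace ℝ (Fin n)) i)) ^ (2 * k)).coeff α
          ∂(sphereMeasure n)) :
    ∀ f g : MvPolynomial (Fin n) ℝ, f.IsHomogeneous (2 * k) → g.IsHomogeneous (2 * k) →
      diffInner n (T f) g = ((2 * k).factorial : ℝ) * L2inner n f g := by
  intro f g hf hg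
  classical
  -- degrees of monomials in the support of g
  have hdeg : ∀ α ∈ g.support, (∑ i, α i) = 2 * k := by
    intro α hα
    have h1 : α.degree = 2 * k := by
      by_contra h
      exact (MvPolynomial.mem_support_iff.mp hα) (hg.coeff_eq_zero h)
    rw [← h1, Finsupp.degree]
    exact (Finset.sum_subset (Finset.subset_univ _)
      (fun x _ hx => Finsupp.notMem_support_iff.mp hx)).symm
  -- step 1: restrict the diffInner sum to g.support
  have h1 : diffInner n (T f) g =
      ∑ α ∈ g.support, (∏ i, ((α i).factorial : ℝ)) * (T f).coeff α * g.coeff α := by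
    rw [diffInner,
      Finset.sum_subset (Finset.subset_union_left (s₂ := g.support))
        (fun α _ hα => by rw [MvPolynomial.notMem_support_iff.mp hα]; ring),
      ← Finset.sum_subset (Finset.subset_union_right (s₁ := (T f).support))
        (fun α _ hα => by rw [MvPolynomial.notMem_support_iff.mp hα]; ring)]
  -- step 2: each term is an integral
  have key : ∀ α ∈ g.support,
      (∏ i, ((α i).factorial : ℝ)) * (T f).coeff α * g.coeff α
      = ∫ v, ((2 * k).factorial : ℝ) *
          (evalS f v * (g.coeff α * ∏ i, ((v : EuclideanSpace ℝ (Fin n)) i) ^ α i))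
          ∂(sphereMeasure n) := by
    intro α hα
    have hwm : (∏ i, ((α i).factorial : ℝ)) * (Nat.multinomial Finset.univ ⇑α : ℝ)
        = ((2 * k).factorial : ℝ) := by
      rw [← Nat.cast_prod, ← Nat.cast_mul, Nat.multinomial_spec, hdeg α hα]
    rw [hT f α]
    have e1 : (∏ i, ((α i).factorial : ℝ)) *
        (∫ v, evalS f v *
          ((linForm n (fun i => (v : EuclideanSpace ℝ (Fin n)) i)) ^ (2 * k)).coeff α
          ∂(sphereMeasure n)) * g.coeff α
        = ((∏ i, ((α i).factorial : ℝ)) * g.coeff α) *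
          ∫ v, evalS f v *
            ((linForm n (fun i => (v : EuclideanSpace ℝ (Fin n)) i)) ^ (2 * k)).coeff α
            ∂(sphereMeasure n) := by ring
    rw [e1, ← integral_const_mul]
    refine integral_congr_ae (Filter.Eventually.of_forall fun v => ?_)
    beta_reduce
    rw [coeff_linForm_pow, if_pos (hdeg α hα), ← hwm]
    ring
  rw [h1, Finset.sum_congr rfl key, ← integral_finset_sum]
  · have e2 : ∀ v, (∑ α ∈ g.support, ((2 * k).factorial : ℝ) *
        (evalS f v * (g.coeff α * ∏ i, ((v : EuclideanSpace ℝ (Fin n)) i) ^ α i)))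
        = ((2 * k).factorial : ℝ) * (evalS f v * evalS g v) := by
      intro v
      rw [show evalS g v = ∑ d ∈ g.support, coeff d g *
          ∏ i, ((v : EuclideanSpace ℝ (Fin n)) i) ^ d i from
          eval_eq' (fun i => (v : EuclideanSpace ℝ (Fin n)) i) g,
        Finset.mul_sum, Finset.mul_sum]
    rw [integral_congr_ae (Filter.Eventually.of_forall e2), L2inner, integral_const_mul]
  · intro α _
    apply integrable_sphere
    exact (continuous_const.mul ((continuous_evalS f).mul (continuous_const.mul
      (continuous_finset_prod _ fun i _ =>
        ((EuclideanSpace.proj i).continuous.comp continuous_subtype_val).pow _))))
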